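/- Suppose Δu = f with u ∈ L²_a(X^{ℓ+1}) and f continuous, bounded, alternating, and in L² (with K ≡ 1, the whole-space theory). Then u is continuous and bounded; i.e. solutions of the Poisson equation with continuous right-hand side are continuous. -/

import Mathlib

open MeasureTheory

/-- The Alexander–Spanier coboundary for the constant kernel `K ≡ 1`. -/
noncomputable def coboundary1 {X : Type*} (n : ℕ) (f : (Fin n → X) → ℝ) :
    (Fin (n + 1) → X) → ℝ :=
  fun x => ∑ i : Fin (n + 1), (-1 : ℝ) ^ (i : ℕ) * f (x ∘ i.succAbove)

/-- The boundary operator `∂ = δ*` for `K ≡ 1`. -/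
noncomputable def boundary0 {X : Type*} [MeasurableSpace X] (μ : Measure X)
    (n : ℕ) (g : (Fin (n + 1) → X) → ℝ) : (Fin n → X) → ℝ :=
  fun x => ∑ i : Fin (n + 1),
    (-1 : ℝ) ^ (i : ℕ) * ∫ t, g (i.insertNth t x) ∂μ

section
variable {m : ℕ}

lemma valSA (i : Fin (m+1)) (k : Fin m) :
    ((i.succAbove k : Fin (m+1)) : ℕ) = if (k:ℕ) < (i:ℕ) then (k:ℕ) else (k:ℕ)+1 := by
  rw [Fin.succAbove]; split_ifs with h h' h'
  · rfl
  · exact absurd h h'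
  · exact absurd h' h
  · rfl

lemma valPA (k : Fin m) (i : Fin (m+1)) :
    ((k.predAbove i : Fin m) : ℕ) = if (k:ℕ) < (i:ℕ) then (i:ℕ) - 1 else (i:ℕ) := by
  rw [Fin.predAbove]; split_ifs with h h' h'
  · rfl
  · exact absurd h h'
  · exact absurd h' h
  · rfl

lemma idA (i : Fin (m+2)) (k : Fin (m+1)) :
    (i.succAbove k).succAbove (k.predAbove i) = i := by
  have hi := i.isLt; have hk := k.isLt
  apply Fin.ext; simp only [valSA, valPA, Fin.coe_castSucc, Fin.val_succ]
  split_ifs <;> omega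

lemma idB (i : Fin (m+2)) (k : Fin (m+1)) (j : Fin m) :
    (i.succAbove k).succAbove ((k.predAbove i).succAbove j) = i.succAbove (k.succAbove j) := by
  have hi := i.isLt; have hk := k.isLt; have hj := j.isLt
  apply Fin.ext; simp only [valSA, valPA, Fin.coe_castSucc, Fin.val_succ]
  split_ifs <;> omega

/-- simplicial identity for tuples -/
lemma remIns {X : Type*} (i : Fin (m+2)) (k : Fin (m+1)) (t : X) (x : Fin (m+1) → X) :
    Fin.removeNth (α := fun _ => X) (i.succAbove k) (i.insertNth t x) =
      Fin.insertNth (α := fun _ => X) (k.predAbove i) t (Fin.removeNth k x) := by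
  funext j
  refine Fin.succAboveCases (k.predAbove i) ?_ ?_ j
  · simp only [Fin.removeNth, idA, Fin.insertNth_apply_same]
  · intro j'
    simp only [Fin.removeNth, idB, Fin.insertNth_apply_succAbove]

/-- the cross-term sum identity -/
lemma crossSum (k : Fin (m+1)) (g : Fin (m+1) → ℝ) :
    ∑ i : Fin (m+2), (-1:ℝ)^((i:ℕ) + ((i.succAbove k : Fin (m+2)):ℕ)) * g (k.predAbove i)
      = - g k - ∑ b : Fin (m+1), (-1:ℝ)^((k:ℕ)+(b:ℕ)) * g b := by
  rw [Fin.sum_univ_succAbove _ (Fin.castSucc k)]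
  have hk := k.isLt
  have h1 : (-1:ℝ)^(((Fin.castSucc k : Fin (m+2)):ℕ) + (((Fin.castSucc k).succAbove k : Fin (m+2)):ℕ))
      * g (k.predAbove (Fin.castSucc k)) = - g k := by
    have e1 : (((Fin.castSucc k).succAbove k : Fin (m+2)):ℕ) = (k:ℕ)+1 := by
      simp only [valSA, Fin.coe_castSucc]; split_ifs <;> omega
    have e2 : k.predAbove (Fin.castSucc k) = k := by
      apply Fin.ext; simp only [valPA, Fin.coe_castSucc]; split_ifs <;> omega
    rw [e1, e2, Fin.coe_castSucc]
    have : (-1:ℝ)^((k:ℕ)+((k:ℕ)+1)) = -1 := by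
      rw [show (k:ℕ)+((k:ℕ)+1) = 2*(k:ℕ)+1 by omega, pow_succ, pow_mul]
      norm_num
    rw [this]; ring
  rw [h1]
  have h2 : ∀ b : Fin (m+1),
      (-1:ℝ)^((((Fin.castSucc k).succAbove b : Fin (m+2)):ℕ)
        + ((((Fin.castSucc k).succAbove b).succAbove k : Fin (m+2)):ℕ))
        * g (k.predAbove ((Fin.castSucc k).succAbove b))
      = -((-1:ℝ)^((k:ℕ)+(b:ℕ)) * g b) := by
    intro b
    have hb := b.isLt
    have e2 : k.predAbove ((Fin.castSucc k).succAbove b) = b := by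
      apply Fin.ext; simp only [valPA, valSA, Fin.coe_castSucc]; split_ifs <;> omega
    rw [e2]
    have hexp : (((Fin.castSucc k).succAbove b : Fin (m+2)):ℕ)
        + ((((Fin.castSucc k).succAbove b).succAbove k : Fin (m+2)):ℕ)
        = (k:ℕ) + (b:ℕ) + 1 := by
      simp only [valSA, Fin.coe_castSucc]; split_ifs <;> omega
    rw [hexp, pow_succ]; ring
  rw [Finset.sum_congr rfl (fun b _ => h2 b), Finset.sum_neg_distrib]
  ring
end

section MP
variable {X : Type*} [MeasurableSpace X] (μ : Measure X) [IsProbabilityMeasure μ]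

lemma mp_snd {α β : Type*} [MeasurableSpace α] [MeasurableSpace β]
    (ν : Measure α) (ρ : Measure β) [IsProbabilityMeasure ν] [SFinite ρ] :
    MeasurePreserving (Prod.snd) (ν.prod ρ) ρ := by
  refine ⟨measurable_snd, ?_⟩
  have := Measure.snd_prod (μ := ν) (ν := ρ)
  rwa [Measure.snd] at this

lemma mp_remove (k : ℕ) (a : Fin (k+1)) :
    MeasurePreserving (fun x : Fin (k+1) → X => Fin.removeNth a x)
      (Measure.pi fun _ : Fin (k+1) => μ) (Measure.pi fun _ : Fin k => μ) := by
  have h1 := measurePreserving_piFinSuccAbove (fun _ : Fin (k+1) => μ) a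
  exact (mp_snd μ (Measure.pi fun _ : Fin k => μ)).comp h1

lemma mp_insert (k : ℕ) (b : Fin (k+1)) :
    MeasurePreserving (fun p : (Fin k → X) × X => b.insertNth p.2 p.1)
      ((Measure.pi fun _ : Fin k => μ).prod μ) (Measure.pi fun _ : Fin (k+1) => μ) := by
  have h1 := (measurePreserving_piFinSuccAbove (fun _ : Fin (k+1) => μ) b).symm
  have h2 : MeasurePreserving (Prod.swap)
      ((Measure.pi fun _ : Fin k => μ).prod μ) (μ.prod (Measure.pi fun _ : Fin k => μ)) :=
    Measure.measurePreserving_swap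
  have h3 := h1.comp h2
  convert h3 using 1
  funext p
  simp [MeasurableEquiv.piFinSuccAbove_symm_apply, Fin.insertNthEquiv]

lemma mp_phi (k : ℕ) (a b : Fin (k+1)) :
    MeasurePreserving (fun p : (Fin (k+1) → X) × X => b.insertNth p.2 (a.removeNth p.1))
      ((Measure.pi fun _ : Fin (k+1) => μ).prod μ) (Measure.pi fun _ : Fin (k+1) => μ) := by
  have h1 : MeasurePreserving (Prod.map (fun x : Fin (k+1) → X => Fin.removeNth a x) (id : X → X))
      ((Measure.pi fun _ : Fin (k+1) => μ).prod μ) ((Measure.pi fun _ : Fin k => μ).prod μ) :=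
    (mp_remove μ k a).prod (MeasurePreserving.id μ)
  exact (mp_insert μ k b).comp h1

end MP

section Lap
variable {X : Type*} [MeasurableSpace X] (μ : Measure X) [IsProbabilityMeasure μ]

lemma slice_int (k : ℕ) (u : (Fin (k+2) → X) → ℝ)
    (hu : Integrable u (Measure.pi fun _ : Fin (k+2) => μ)) (a b : Fin (k+2)) :
    Integrable (fun p : (Fin (k+2) → X) × X => u (b.insertNth p.2 (a.removeNth p.1)))
      ((Measure.pi fun _ : Fin (k+2) => μ).prod μ) :=
  ((mp_phi μ (k+1) a b).integrable_comp hu.aestronglyMeasurable).mpr hu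

lemma lap_eq (k : ℕ) (u : (Fin (k+2) → X) → ℝ)
    (hu : Integrable u (Measure.pi fun _ : Fin (k+2) => μ)) :
    ∀ᵐ x ∂(Measure.pi fun _ : Fin (k+2) => μ),
      boundary0 μ (k+2) (coboundary1 (k+2) u) x + coboundary1 (k+1) (boundary0 μ (k+1) u) x
        = (k+3 : ℝ) * u x - ∑ a : Fin (k+2), ∫ t, u (Function.update x a t) ∂μ := by
  have hae : ∀ᵐ x ∂(Measure.pi fun _ : Fin (k+2) => μ), ∀ a b : Fin (k+2),
      Integrable (fun t => u (b.insertNth t (a.removeNth x))) μ := by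
    rw [ae_all_iff]; intro a; rw [ae_all_iff]; intro b
    exact (slice_int μ k u hu a b).prod_right_ae
  filter_upwards [hae] with x hx
  set J : Fin (k+2) → Fin (k+2) → ℝ :=
    fun a b => ∫ t, u (b.insertNth t (a.removeNth x)) ∂μ with hJ
  -- term 2
  have hterm2 : coboundary1 (k+1) (boundary0 μ (k+1) u) x
      = ∑ a : Fin (k+2), ∑ b : Fin (k+2), (-1:ℝ)^((a:ℕ)+(b:ℕ)) * J a b := by
    unfold coboundary1 boundary0
    refine Finset.sum_congr rfl fun a _ => ?_
    rw [Finset.mul_sum]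
    refine Finset.sum_congr rfl fun b _ => ?_
    rw [pow_add, mul_assoc]
    rfl
  -- inner integral of term 1
  have hinner : ∀ i : Fin (k+3),
      ∫ t, coboundary1 (k+2) u (i.insertNth t x) ∂μ
        = (-1:ℝ)^(i:ℕ) * u x
          + ∑ c : Fin (k+2), (-1:ℝ)^((i.succAbove c : Fin (k+3)):ℕ) * J c (c.predAbove i) := by
    intro i
    have hre : ∀ t : X, coboundary1 (k+2) u (i.insertNth t x)
        = (-1:ℝ)^(i:ℕ) * u x
          + ∑ c : Fin (k+2), (-1:ℝ)^((i.succAbove c : Fin (k+3)):ℕ)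
              * u ((c.predAbove i).insertNth t (c.removeNth x)) := by
      intro t
      unfold coboundary1
      rw [Fin.sum_univ_succAbove _ i]
      congr 1
      · rw [Fin.insertNth_comp_succAbove]
      · refine Finset.sum_congr rfl fun c _ => ?_
        congr 1
        rw [show ((i.insertNth t x) ∘ (i.succAbove c).succAbove)
            = Fin.removeNth (α := fun _ => X) (i.succAbove c) (i.insertNth t x) from rfl,
          remIns]
    rw [integral_congr_ae (Filter.Eventually.of_forall hre)]
    rw [integral_add (integrable_const _)
      (integrable_finset_sum _ (fun c _ => ((hx c (c.predAbove i)).const_mul _))),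
      integral_const, integral_finset_sum _ (fun c _ => (hx c (c.predAbove i)).const_mul _)]
    simp only [Measure.real, measure_univ, ENNReal.toReal_one, one_smul]
    congr 1
    exact Finset.sum_congr rfl fun c _ => integral_const_mul _ _
  -- term 1
  have hterm1 : boundary0 μ (k+2) (coboundary1 (k+2) u) x
      = (k+3 : ℝ) * u x
        + ∑ c : Fin (k+2), (- J c c - ∑ b : Fin (k+2), (-1:ℝ)^((c:ℕ)+(b:ℕ)) * J c b) := by
    unfold boundary0
    have hstep : ∀ i : Fin (k+3),
        (-1:ℝ)^(i:ℕ) * (∫ t, coboundary1 (k+2) u (i.insertNth t x) ∂μ)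
          = u x + ∑ c : Fin (k+2),
              (-1:ℝ)^((i:ℕ)+((i.succAbove c : Fin (k+3)):ℕ)) * J c (c.predAbove i) := by
      intro i
      rw [hinner i, mul_add, Finset.mul_sum]
      congr 1
      · rw [← mul_assoc, ← pow_add]
        have : (-1:ℝ)^((i:ℕ)+(i:ℕ)) = 1 := by
          rw [show (i:ℕ)+(i:ℕ) = 2*(i:ℕ) by omega, pow_mul]; norm_num
        rw [this, one_mul]
      · exact Finset.sum_congr rfl fun c _ => by rw [← mul_assoc, ← pow_add]
    rw [Finset.sum_congr rfl fun i _ => hstep i, Finset.sum_add_distrib,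
      Finset.sum_const, Finset.card_univ, Fintype.card_fin, Finset.sum_comm]
    congr 1
    · rw [nsmul_eq_mul]; push_cast; ring
    · exact Finset.sum_congr rfl fun c _ => crossSum c (fun b => J c b)
  rw [hterm1, hterm2, add_assoc, ← Finset.sum_add_distrib]
  have : ∀ c : Fin (k+2),
      (- J c c - ∑ b : Fin (k+2), (-1:ℝ)^((c:ℕ)+(b:ℕ)) * J c b)
        + ∑ b : Fin (k+2), (-1:ℝ)^((c:ℕ)+(b:ℕ)) * J c b = - J c c := by
    intro c; ring
  rw [Finset.sum_congr rfl fun c _ => this c, Finset.sum_neg_distrib, ← sub_eq_add_neg]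
  congr 1
  refine Finset.sum_congr rfl fun c _ => ?_
  simp only [hJ, Fin.insertNth_removeNth]

end Lap


section Fix

open BoundedContinuousFunction

variable {X : Type*} [MetricSpace X] [SecondCountableTopology X]
  [MeasurableSpace X] [BorelSpace X]
  (μ : Measure X) [IsProbabilityMeasure μ] {m : ℕ}

lemma cont_update_left (a : Fin m) (t : X) :
    Continuous (fun x : Fin m → X => Function.update x a t) := by
  refine continuous_pi fun j => ?_
  have : (fun x : Fin m → X => Function.update x a t j)
      = fun x : Fin m → X => if j = a then t else x j := by
    funext x; exact Function.update_apply x a t j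
  rw [this]
  by_cases h : j = a
  · simp only [if_pos h]; exact continuous_const
  · simp only [if_neg h]; exact continuous_apply j

lemma cont_update_right (x : Fin m → X) (a : Fin m) :
    Continuous (fun t : X => Function.update x a t) := by
  refine continuous_pi fun j => ?_
  have : (fun t : X => Function.update x a t j)
      = fun t : X => if j = a then t else x j := by
    funext t; exact Function.update_apply x a t j
  rw [this]
  by_cases h : j = a
  · simp only [if_pos h]; exact continuous_id
  · simp only [if_neg h]; exact continuous_const

/-- composing a bounded continuous function with coordinate update is integrable -/
lemma int_comp_update (v : (Fin m → X) →ᵇ ℝ) (x : Fin m → X) (a : Fin m) :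
    Integrable (fun t => v (Function.update x a t)) μ :=
  (v.compContinuous ⟨fun t : X => Function.update x a t, cont_update_right x a⟩).integrable μ

/-- the averaging operator in coordinate `a` -/
noncomputable def Mfun (a : Fin m) (v : (Fin m → X) →ᵇ ℝ) : (Fin m → X) → ℝ :=
  fun x => ∫ t, v (Function.update x a t) ∂μ

lemma Mfun_cont (a : Fin m) (v : (Fin m → X) →ᵇ ℝ) : Continuous (Mfun μ a v) := by
  refine continuous_of_dominated (bound := fun _ => ‖v‖) ?_ ?_ (integrable_const _) ?_
  · intro x
    exact ((v.continuous.comp (cont_update_right x a))).aestronglyMeasurable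
  · intro x
    exact Filter.Eventually.of_forall fun t => v.norm_coe_le_norm _
  · exact Filter.Eventually.of_forall fun t => v.continuous.comp (cont_update_left a t)

lemma Mfun_bdd (a : Fin m) (v : (Fin m → X) →ᵇ ℝ) (x : Fin m → X) :
    ‖Mfun μ a v x‖ ≤ ‖v‖ := by
  have h := norm_integral_le_of_norm_le_const (μ := μ)
    (f := fun t => v (Function.update x a t)) (C := ‖v‖)
    (Filter.Eventually.of_forall fun t => v.norm_coe_le_norm _)
  simpa [measure_univ, Mfun] using h

lemma Mfun_dist (a : Fin m) (v w : (Fin m → X) →ᵇ ℝ) (x : Fin m → X) :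
    ‖Mfun μ a v x - Mfun μ a w x‖ ≤ dist v w := by
  have hsub : Mfun μ a v x - Mfun μ a w x
      = ∫ t, (v (Function.update x a t) - w (Function.update x a t)) ∂μ :=
    (integral_sub (int_comp_update μ v x a) (int_comp_update μ w x a)).symm
  rw [hsub]
  have h := norm_integral_le_of_norm_le_const (μ := μ)
    (f := fun t => v (Function.update x a t) - w (Function.update x a t)) (C := dist v w)
    (Filter.Eventually.of_forall fun t => by
      simpa [dist_eq_norm] using BoundedContinuousFunction.dist_coe_le_dist
        (f := v) (g := w) (Function.update x a t))
  simpa [measure_univ] using h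

variable (m) in
/-- the affine contraction whose fixed point is the continuous representative -/
noncomputable def TT (f0 : (Fin m → X) →ᵇ ℝ) (v : (Fin m → X) →ᵇ ℝ) : (Fin m → X) →ᵇ ℝ :=
  BoundedContinuousFunction.ofNormedAddCommGroup
    (fun x => ((m : ℝ) + 1)⁻¹ * (f0 x + ∑ a : Fin m, Mfun μ a v x))
    (continuous_const.mul (f0.continuous.add
      (continuous_finset_sum _ fun a _ => Mfun_cont μ a v)))
    (((m : ℝ) + 1)⁻¹ * (‖f0‖ + m * ‖v‖))
    (by
      intro x
      rw [norm_mul]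
      have h1 : ‖((m : ℝ) + 1)⁻¹‖ = ((m : ℝ) + 1)⁻¹ := by
        rw [Real.norm_eq_abs, abs_of_nonneg (by positivity)]
      rw [h1]
      have h2 : ‖f0 x + ∑ a : Fin m, Mfun μ a v x‖ ≤ ‖f0‖ + m * ‖v‖ := by
        refine le_trans (norm_add_le _ _) ?_
        refine add_le_add (f0.norm_coe_le_norm x) ?_
        refine le_trans (norm_sum_le _ _) ?_
        calc ∑ a : Fin m, ‖Mfun μ a v x‖ ≤ ∑ _a : Fin m, ‖v‖ :=
              Finset.sum_le_sum fun a _ => Mfun_bdd μ a v x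
          _ = m * ‖v‖ := by simp [Finset.sum_const, nsmul_eq_mul]
      exact mul_le_mul_of_nonneg_left h2 (by positivity))

lemma TT_apply (f0 : (Fin m → X) →ᵇ ℝ) (v : (Fin m → X) →ᵇ ℝ) (x : Fin m → X) :
    TT μ m f0 v x = ((m : ℝ) + 1)⁻¹ * (f0 x + ∑ a : Fin m, Mfun μ a v x) := rfl

lemma TT_lip (f0 : (Fin m → X) →ᵇ ℝ) (v w : (Fin m → X) →ᵇ ℝ) :
    dist (TT μ m f0 v) (TT μ m f0 w) ≤ ((m : ℝ) / ((m : ℝ) + 1)) * dist v w := by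
  rw [BoundedContinuousFunction.dist_le (by positivity)]
  intro x
  rw [Real.dist_eq, TT_apply, TT_apply]
  have hdiff : ((m : ℝ) + 1)⁻¹ * (f0 x + ∑ a : Fin m, Mfun μ a v x)
      - ((m : ℝ) + 1)⁻¹ * (f0 x + ∑ a : Fin m, Mfun μ a w x)
      = ((m : ℝ) + 1)⁻¹ * ∑ a : Fin m, (Mfun μ a v x - Mfun μ a w x) := by
    rw [Finset.sum_sub_distrib]; ring
  rw [hdiff, abs_mul, abs_of_nonneg (by positivity : (0:ℝ) ≤ ((m : ℝ) + 1)⁻¹)]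
  have h2 : |∑ a : Fin m, (Mfun μ a v x - Mfun μ a w x)| ≤ m * dist v w := by
    refine le_trans (Finset.abs_sum_le_sum_abs _ _) ?_
    calc ∑ a : Fin m, |Mfun μ a v x - Mfun μ a w x| ≤ ∑ _a : Fin m, dist v w :=
          Finset.sum_le_sum fun a _ => by
            have := Mfun_dist μ a v w x; rwa [Real.norm_eq_abs] at this
      _ = m * dist v w := by simp [Finset.sum_const, nsmul_eq_mul]
  calc ((m : ℝ) + 1)⁻¹ * |∑ a : Fin m, (Mfun μ a v x - Mfun μ a w x)|
      ≤ ((m : ℝ) + 1)⁻¹ * (m * dist v w) :=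
        mul_le_mul_of_nonneg_left h2 (by positivity)
    _ = ((m : ℝ) / ((m : ℝ) + 1)) * dist v w := by ring

end Fix

open BoundedContinuousFunction

/-- Poisson regularity on the whole space, `K ≡ 1`: if
`Δu = f` with `u ∈ L²_a(X^{ℓ+1})` and `f` continuous, bounded, alternating
and in `L²`, then `u` is (a.e. equal to a function that is) continuous and
bounded.  Here `ℓ = n + 1` and `Δ = ∂δ + δ∂`. -/
theorem poisson_regularity
    {X : Type*} [MetricSpace X] [CompleteSpace X]
    [TopologicalSpace.SeparableSpace X]
    [MeasurableSpace X] [BorelSpace X]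
    (μ : Measure X) [IsProbabilityMeasure μ]
    (hμpos : ∀ U : Set X, IsOpen U → U.Nonempty → 0 < μ U)
    (n : ℕ) (u f : (Fin (n + 2) → X) → ℝ)
    (hu_alt : ∀ (σ : Equiv.Perm (Fin (n + 2))) (x : Fin (n + 2) → X),
      u (x ∘ σ) = ((Equiv.Perm.sign σ : ℤ) : ℝ) * u x)
    (hu : MemLp u 2 (Measure.pi fun _ : Fin (n + 2) => μ))
    (hf_cont : Continuous f)
    (hf_bdd : ∃ C : ℝ, ∀ x, |f x| ≤ C)
    (hf_alt : ∀ (σ : Equiv.Perm (Fin (n + 2))) (x : Fin (n + 2) → X),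
      f (x ∘ σ) = ((Equiv.Perm.sign σ : ℤ) : ℝ) * f x)
    (hf : MemLp f 2 (Measure.pi fun _ : Fin (n + 2) => μ))
    (hpoisson : (fun x => boundary0 μ (n + 2) (coboundary1 (n + 2) u) x +
        coboundary1 (n + 1) (boundary0 μ (n + 1) u) x)
      =ᵐ[Measure.pi fun _ : Fin (n + 2) => μ] f) :
    ∃ v : (Fin (n + 2) → X) → ℝ, Continuous v ∧ (∃ C : ℝ, ∀ x, |v x| ≤ C) ∧
      u =ᵐ[Measure.pi fun _ : Fin (n + 2) => μ] v := by
  classical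
  haveI : SecondCountableTopology X :=
    UniformSpace.secondCountable_of_separable X
  obtain ⟨C, hC⟩ := hf_bdd
  set P : Measure (Fin (n + 2) → X) := Measure.pi fun _ : Fin (n + 2) => μ with hP
  have hu1 : Integrable u P := hu.integrable one_le_two
  -- the bounded continuous data
  set f0 : (Fin (n + 2) → X) →ᵇ ℝ :=
    BoundedContinuousFunction.ofNormedAddCommGroup f hf_cont C
      (fun x => by rw [Real.norm_eq_abs]; exact hC x) with hf0
  have hf0_apply : ∀ x, f0 x = f x := fun x => rfl
  -- the contraction and its fixed point
  have hKlt : ((⟨(n + 2 : ℝ) / ((n + 2 : ℝ) + 1), by positivity⟩ : NNReal)) < 1 := by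
    refine NNReal.coe_lt_coe.mp ?_
    show (n + 2 : ℝ) / ((n + 2 : ℝ) + 1) < 1
    rw [div_lt_one (by positivity)]
    linarith
  have hcontr : ContractingWith ⟨(n + 2 : ℝ) / ((n + 2 : ℝ) + 1), by positivity⟩
      (TT μ (n + 2) f0) := by
    refine ⟨hKlt, LipschitzWith.of_dist_le_mul fun v w => ?_⟩
    have := TT_lip μ f0 v w
    have hcast : (((n : ℕ) + 2 : ℕ) : ℝ) = (n + 2 : ℝ) := by push_cast; ring
    calc dist (TT μ (n + 2) f0 v) (TT μ (n + 2) f0 w)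
        ≤ (((n + 2 : ℕ) : ℝ) / (((n + 2 : ℕ) : ℝ) + 1)) * dist v w := this
      _ = ((⟨(n + 2 : ℝ) / ((n + 2 : ℝ) + 1), by positivity⟩ : NNReal) : ℝ) * dist v w := by
          rw [hcast]
  set vb : (Fin (n + 2) → X) →ᵇ ℝ := ContractingWith.fixedPoint (TT μ (n + 2) f0) hcontr
    with hvb
  have hfix : TT μ (n + 2) f0 vb = vb := hcontr.fixedPoint_isFixedPt
  have hveq : ∀ x, ((n : ℝ) + 3) * vb x
      = f x + ∑ a : Fin (n + 2), ∫ t, vb (Function.update x a t) ∂μ := by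
    intro x
    have h : TT μ (n + 2) f0 vb x = vb x := by rw [hfix]
    rw [TT_apply] at h
    have hpos : (((n + 2 : ℕ) : ℝ) + 1) ≠ 0 := by positivity
    have h2 : (((n + 2 : ℕ) : ℝ) + 1) * vb x
        = f0 x + ∑ a : Fin (n + 2), Mfun μ a vb x := by
      rw [← h]; field_simp
    have hcast : (((n + 2 : ℕ) : ℝ) + 1) = ((n : ℝ) + 3) := by push_cast; ring
    rw [hcast] at h2
    rw [h2, hf0_apply]
    rfl
  -- the a.e. equation for u
  have hueq : ∀ᵐ x ∂P, ((n : ℝ) + 3) * u x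
      = f x + ∑ a : Fin (n + 2), ∫ t, u (Function.update x a t) ∂μ := by
    filter_upwards [lap_eq μ n u hu1, hpoisson] with x h1 h2
    rw [h2] at h1
    linarith
  -- a.e. integrability of update-slices of u
  have hae2 : ∀ᵐ x ∂P, ∀ a : Fin (n + 2),
      Integrable (fun t => u (Function.update x a t)) μ := by
    rw [ae_all_iff]
    intro a
    filter_upwards [(slice_int μ n u hu1 a a).prod_right_ae] with x hx
    simpa [Fin.insertNth_removeNth] using hx
  -- the difference w
  set w : (Fin (n + 2) → X) → ℝ := fun y => u y - vb y with hw
  have hw_int : Integrable w P := hu1.sub (vb.integrable P)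
  have hw_meas : AEStronglyMeasurable w P := hw_int.aestronglyMeasurable
  -- a.e. equation for w
  have hweq : ∀ᵐ x ∂P, ((n : ℝ) + 3) * w x
      = ∑ a : Fin (n + 2), ∫ t, w (Function.update x a t) ∂μ := by
    filter_upwards [hueq, hae2] with x h1 h2
    have h3 := hveq x
    have h4 : ∀ a : Fin (n + 2), ∫ t, w (Function.update x a t) ∂μ
        = (∫ t, u (Function.update x a t) ∂μ) - ∫ t, vb (Function.update x a t) ∂μ := by
      intro a
      exact integral_sub (h2 a) (int_comp_update μ vb x a)
    rw [Finset.sum_congr rfl fun a _ => h4 a, Finset.sum_sub_distrib]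
    simp only [hw]
    linarith
  -- product integrability of update-slices of w
  have hprod : ∀ a : Fin (n + 2),
      Integrable (fun p : (Fin (n + 2) → X) × X => w (Function.update p.1 a p.2)) (P.prod μ) := by
    intro a
    have h := ((mp_phi μ (n + 1) a a).integrable_comp hw_meas).mpr hw_int
    have heq : (w ∘ fun p : (Fin (n + 2) → X) × X => a.insertNth p.2 (a.removeNth p.1))
        = fun p : (Fin (n + 2) → X) × X => w (Function.update p.1 a p.2) := by
      funext p
      simp [Function.comp, Fin.insertNth_removeNth]
    rwa [heq] at h
  -- the L¹ contraction estimate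
  set I : ℝ := ∫ x, |w x| ∂P with hI
  have hI0 : 0 ≤ I := integral_nonneg fun x => abs_nonneg _
  have hper : ∀ a : Fin (n + 2), ∫ x, ∫ t, ‖w (Function.update x a t)‖ ∂μ ∂P = I := by
    intro a
    have h1 : ∫ x, ∫ t, ‖w (Function.update x a t)‖ ∂μ ∂P
        = ∫ p, ‖w (Function.update p.1 a p.2)‖ ∂(P.prod μ) :=
      integral_integral (hprod a).norm
    have hmp := mp_phi μ (n + 1) a a
    have h2 : ∫ p, ‖w (Function.update p.1 a p.2)‖ ∂(P.prod μ) = ∫ y, ‖w y‖ ∂P := by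
      have hmeas2 : AEStronglyMeasurable (fun y => ‖w y‖)
          (Measure.map (fun p : (Fin (n + 2) → X) × X => a.insertNth p.2 (a.removeNth p.1))
            ((Measure.pi fun _ : Fin (n + 2) => μ).prod μ)) := by
        rw [hmp.map_eq]; exact (hP ▸ hw_meas).norm
      have heq2 : ∫ p, ‖w (Function.update p.1 a p.2)‖
            ∂((Measure.pi fun _ : Fin (n + 2) => μ).prod μ)
          = ∫ p, ‖w ((fun p : (Fin (n + 2) → X) × X =>
              a.insertNth p.2 (a.removeNth p.1)) p)‖
            ∂((Measure.pi fun _ : Fin (n + 2) => μ).prod μ) :=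
        integral_congr_ae (Filter.Eventually.of_forall fun p => by
          simp [Fin.insertNth_removeNth])
      rw [hP, heq2, ← integral_map hmp.measurable.aemeasurable hmeas2, hmp.map_eq]
    rw [h1, h2, hI]
    exact integral_congr_ae (Filter.Eventually.of_forall fun y => (Real.norm_eq_abs _))
  have hkey : ((n : ℝ) + 3) * I ≤ ((n : ℝ) + 2) * I := by
    have hstep1 : ((n : ℝ) + 3) * I = ∫ x, |((n : ℝ) + 3) * w x| ∂P := by
      rw [hI, ← integral_const_mul]
      refine integral_congr_ae (Filter.Eventually.of_forall fun x => ?_)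
      show ((n : ℝ) + 3) * |w x| = |((n : ℝ) + 3) * w x|
      rw [abs_mul, abs_of_nonneg (by positivity : (0:ℝ) ≤ (n : ℝ) + 3)]
    have hint2 : Integrable (fun x => ∑ a : Fin (n + 2),
        ∫ t, ‖w (Function.update x a t)‖ ∂μ) P :=
      integrable_finset_sum _ fun a _ => (hprod a).integral_norm_prod_left
    have hstep2 : ∫ x, |((n : ℝ) + 3) * w x| ∂P
        ≤ ∫ x, ∑ a : Fin (n + 2), ∫ t, ‖w (Function.update x a t)‖ ∂μ ∂P := by
      refine integral_mono_ae ((hw_int.const_mul _).abs) hint2 ?_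
      filter_upwards [hweq] with x hx
      rw [hx]
      refine le_trans (Finset.abs_sum_le_sum_abs _ _) (Finset.sum_le_sum fun a _ => ?_)
      rw [← Real.norm_eq_abs]
      exact norm_integral_le_integral_norm _
    have hstep3 : ∫ x, ∑ a : Fin (n + 2), ∫ t, ‖w (Function.update x a t)‖ ∂μ ∂P
        = ((n : ℝ) + 2) * I := by
      rw [integral_finset_sum _ fun a _ => (hprod a).integral_norm_prod_left]
      have hc : ((n + 2 : ℕ) : ℝ) = (n : ℝ) + 2 := by push_cast; ring
      rw [Finset.sum_congr rfl fun a _ => hper a, Finset.sum_const, Finset.card_univ,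
        Fintype.card_fin, nsmul_eq_mul, hc]
    calc ((n : ℝ) + 3) * I = ∫ x, |((n : ℝ) + 3) * w x| ∂P := hstep1
      _ ≤ ∫ x, ∑ a : Fin (n + 2), ∫ t, ‖w (Function.update x a t)‖ ∂μ ∂P := hstep2
      _ = ((n : ℝ) + 2) * I := hstep3
  have hIzero : I = 0 := le_antisymm (by linarith) hI0
  have hwzero : w =ᵐ[P] 0 := by
    have habs := (integral_eq_zero_iff_of_nonneg_ae
      (Filter.Eventually.of_forall fun x => abs_nonneg (w x)) hw_int.abs).mp hIzero
    filter_upwards [habs] with x hx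
    have : |w x| = 0 := hx
    simpa [abs_eq_zero] using this
  refine ⟨vb, vb.continuous, ⟨‖vb‖, fun x => by
    rw [← Real.norm_eq_abs]; exact vb.norm_coe_le_norm x⟩, ?_⟩
  filter_upwards [hwzero] with x hx
  have : u x - vb x = 0 := hx
  linarith
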